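/- Let p ≠ q in [r], u ∈ U, and suppose b := b_{p,q}(u) = b_{q,p}(u) > 0. On the full Fock space F({1,2}) with vacuum state φ, let c = √b·(ℓ(1) + ℓ(2)*), let P₁ be the orthogonal projection onto the closed span of the word basis vectors δ_w with w of odd length, and P₂ the orthogonal projection onto the closed span of δ_Ω together with the δ_w with w of even positive length. Then for every m ≥ 1, all x₁,…,x_m ∈ {ζ_{p,q}(u), ζ_{q,p}(u)} and all ε₁,…,ε_m ∈ {1,*}: Ψ_q(x₁^{ε₁}⋯x_m^{ε_m}) = φ(y₁^{ε₁}⋯y_m^{ε_m}), where y_j = cP₂ if x_j = ζ_{p,q}(u) and y_j = cP₁ if x_j = ζ_{q,p}(u); that is, the joint *-distribution of the pair {ζ_{p,q}(u), ζ_{q,p}(u)} with respect to Ψ_q agrees with that of the pair {cP₂, cP₁} with respect to φ. -/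

import Mathlib

noncomputable section

/-- A letter of a word in the matricially free Fock space of tracial type. -/
abbrev MLetter (r : ℕ) (L : Type*) := (Fin r × Fin r) × L

/-- A finite nonempty chained word with letters in `J × L`. -/
structure MWord (r : ℕ) (J : Set (Fin r × Fin r)) (L : Type*) where
  head : MLetter r L
  tail : List (MLetter r L)
  headJ : head.1 ∈ J
  tailJ : ∀ x ∈ tail, x.1 ∈ J
  chain : List.Chain' (fun a b : MLetter r L => a.1.2 = b.1.1) (head :: tail)

/-- Canonical orthonormal basis index set: vacua `Ω₁,…,Ω_r` and the words. -/
abbrev MBasis (r : ℕ) (J : Set (Fin r × Fin r)) (L : Type*) := (Fin r) ⊕ (MWord r J L)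

/-- The matricially free Fock space of tracial type, `ℓ²` of the basis set. -/
abbrev MSpace (r : ℕ) (J : Set (Fin r × Fin r)) (L : Type*) :=
  lp (fun _ : MBasis r J L => ℂ) 2

/-- Canonical basis vector. -/
def mvec {r : ℕ} {J : Set (Fin r × Fin r)} {L : Type*} (i : MBasis r J L) : MSpace r J L := by
  classical exact lp.single 2 i 1

/-- The vacuum vector `Ω_q`. -/
def vac {r : ℕ} {J : Set (Fin r × Fin r)} {L : Type*} (q : Fin r) : MSpace r J L :=
  mvec (Sum.inl q)

/-- Basis vector of a word. -/
def wvec {r : ℕ} {J : Set (Fin r × Fin r)} {L : Type*} (w : MWord r J L) : MSpace r J L :=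
  mvec (Sum.inr w)

/-- The single-letter word. -/
def MWord.single {r : ℕ} {J : Set (Fin r × Fin r)} {L : Type*}
    (x : MLetter r L) (hx : x.1 ∈ J) : MWord r J L :=
  ⟨x, [], hx, (by intro y hy; cases hy), List.isChain_singleton _⟩

/-- Prepending a letter to a word. -/
def MWord.cons {r : ℕ} {J : Set (Fin r × Fin r)} {L : Type*}
    (x : MLetter r L) (hx : x.1 ∈ J) (w : MWord r J L)
    (hc : x.1.2 = w.head.1.1) : MWord r J L :=
  ⟨x, w.head :: w.tail, hx, by
      intro y hy
      rcases List.mem_cons.mp hy with h | h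
      · exact h ▸ w.headJ
      · exact w.tailJ y h,
    List.isChain_cons_cons.mpr ⟨hc, w.chain⟩⟩

/-- `T` is the matricially free creation operator `℘_{p,q}(l)` with covariance `b`:
it maps `Ω_q` to `√b·((p,q,l))`, each word starting with first index `q` to `√b` times the
word with `((p,q),l)` prepended, and all other canonical basis vectors to `0`. -/
def IsMFCreation {r : ℕ} {J : Set (Fin r × Fin r)} {L : Type*}
    (b : ℝ) (p q : Fin r) (l : L) (hpq : ((p, q) : Fin r × Fin r) ∈ J)
    (T : MSpace r J L →L[ℂ] MSpace r J L) : Prop :=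
  T (vac q) = (Real.sqrt b : ℂ) • wvec (MWord.single ((p, q), l) hpq) ∧
  (∀ q' : Fin r, q' ≠ q → T (vac q') = 0) ∧
  (∀ (w : MWord r J L) (h : w.head.1.1 = q),
      T (wvec w) = (Real.sqrt b : ℂ) • wvec (MWord.cons ((p, q), l) hpq w h.symm)) ∧
  (∀ w : MWord r J L, w.head.1.1 ≠ q → T (wvec w) = 0)

/-- The vector state `Ψ_q(a) = ⟨aΩ_q, Ω_q⟩`. -/
def PsiM {r : ℕ} {J : Set (Fin r × Fin r)} {L : Type*} (q : Fin r)
    (a : MSpace r J L →L[ℂ] MSpace r J L) : ℂ :=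
  @inner ℂ _ _ (vac q : MSpace r J L) (a (vac q))

end
noncomputable section

/-- Basis index set of the full Fock space over `I`: the vacuum and the nonempty words. -/
abbrev FBasis (I : Type*) := Unit ⊕ {w : List I // w ≠ []}

/-- The full Fock space over `I`, `ℓ²` of its canonical basis set. -/
abbrev FSpace (I : Type*) := lp (fun _ : FBasis I => ℂ) 2

/-- Canonical basis vector of the full Fock space. -/
def fvec {I : Type*} (i : FBasis I) : FSpace I := by
  classical exact lp.single 2 i 1

/-- The vacuum vector `δ_Ω`. -/
def fvac {I : Type*} : FSpace I := fvec (Sum.inl ())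

/-- The basis vector `δ_w` of a nonempty word `w`. -/
def fword {I : Type*} (w : List I) (hw : w ≠ []) : FSpace I := fvec (Sum.inr ⟨w, hw⟩)

/-- `T` is the free creation operator `ℓ(i)`: it sends `δ_Ω` to `δ_{(i)}` and each
word basis vector `δ_w` to `δ_{i·w}`. -/
def IsFreeCreation {I : Type*} (i : I) (T : FSpace I →L[ℂ] FSpace I) : Prop :=
  T fvac = fword [i] (by simp) ∧
  ∀ (w : List I) (hw : w ≠ []), T (fword w hw) = fword (i :: w) (by simp)

/-- The vacuum state `φ(a) = ⟨aδ_Ω, δ_Ω⟩` on the full Fock space. -/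
def fockState {I : Type*} (a : FSpace I →L[ℂ] FSpace I) : ℂ :=
  @inner ℂ _ _ (fvac : FSpace I) (a fvac)

/-- The Hilbert direct sum `F^{⊕r}` of `r` copies of the full Fock space. -/
abbrev FockR (r : ℕ) (I : Type*) := PiLp 2 (fun _ : Fin r => FSpace I)

instance pilp_completeSpace {ι : Type*} [Fintype ι] {E : ι → Type*}
    [∀ i, NormedAddCommGroup (E i)] [∀ i, CompleteSpace (E i)] :
    CompleteSpace (PiLp 2 E) :=
  inferInstance

/-- Tuple constructor for `F^{⊕r}`. -/
def tupOf {r : ℕ} {I : Type*} (f : Fin r → FSpace I) : FockR r I :=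
  (WithLp.equiv 2 (∀ _ : Fin r, FSpace I)).symm f

/-- Component of an element of `F^{⊕r}`. -/
def tupComp {r : ℕ} {I : Type*} (ξ : FockR r I) (k : Fin r) : FSpace I :=
  (WithLp.equiv 2 (∀ _ : Fin r, FSpace I)) ξ k

/-- `δ^{(q)}`, the tuple with `δ_Ω` in position `q` and `0` elsewhere. -/
def fockDelta {r : ℕ} {I : Type*} (q : Fin r) : FockR r I :=
  tupOf (fun k => if k = q then fvac else 0)

/-- The state `Φ_k(x) = ⟨x δ^{(k)}, δ^{(k)}⟩` on the bounded operators on `F^{⊕r}`. -/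
def PhiR {r : ℕ} {I : Type*} (k : Fin r) (x : FockR r I →L[ℂ] FockR r I) : ℂ :=
  @inner ℂ _ _ (fockDelta k : FockR r I) (x (fockDelta k))

end
/-- `x^ε` for `ε ∈ {1, *}`: `x^1 = x` (encoded `true`) and `x^* = adjoint x` (encoded `false`). -/
noncomputable def sOp {H : Type*} [NormedAddCommGroup H] [InnerProductSpace ℂ H]
    [CompleteSpace H] (ε : Bool) (x : H →L[ℂ] H) : H →L[ℂ] H :=
  if ε then x else ContinuousLinearMap.adjoint x


noncomputable section LpAux
open scoped InnerProductSpace ComplexConjugate ENNReal NNReal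

namespace LpAux

variable {ι κ : Type*}

lemma single_apply' [DecidableEq ι] (i j : ι) (c : ℂ) :
    (lp.single 2 i c : lp (fun _ : ι => ℂ) 2) j = if j = i then c else 0 := by
  rw [lp.single_apply]
  by_cases h : j = i
  · subst h; simp
  · simp [h]

lemma inner_single_left' [DecidableEq ι] (i : ι) (c : ℂ) (f : lp (fun _ : ι => ℂ) 2) :
    ⟪(lp.single 2 i c : lp (fun _ : ι => ℂ) 2), f⟫_ℂ = conj c * f i := by
  rw [lp.inner_single_left]; simp [RCLike.inner_apply, mul_comm]

lemma inner_single_right' [DecidableEq ι] (i : ι) (c : ℂ) (f : lp (fun _ : ι => ℂ) 2) :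
    ⟪f, (lp.single 2 i c : lp (fun _ : ι => ℂ) 2)⟫_ℂ = conj (f i) * c := by
  rw [lp.inner_single_right]; simp [RCLike.inner_apply, mul_comm]

/-- Two continuous linear maps out of `ℓ²(ι)` agreeing on the standard basis agree. -/
lemma ext_on_singles [DecidableEq ι] {H : Type*} [NormedAddCommGroup H] [NormedSpace ℂ H]
    (T S : lp (fun _ : ι => ℂ) 2 →L[ℂ] H)
    (h : ∀ i, T (lp.single 2 i 1) = S (lp.single 2 i 1)) : T = S := by
  ext f
  have hs := lp.hasSum_single (E := fun _ : ι => ℂ) ENNReal.ofNat_ne_top f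
  have h1 : HasSum (fun i => T (lp.single 2 i (f i))) (T f) := hs.mapL T
  have h2 : HasSum (fun i => S (lp.single 2 i (f i))) (S f) := hs.mapL S
  have key : ∀ i, T (lp.single 2 i (f i)) = S (lp.single 2 i (f i)) := by
    intro i
    have : (lp.single 2 i (f i) : lp (fun _ : ι => ℂ) 2) = f i • lp.single 2 i 1 := by
      rw [← lp.single_smul]; norm_num
    rw [this, map_smul, map_smul, h i]
  rw [funext key] at h1
  exact h1.unique h2

lemma adjoint_apply' [DecidableEq ι] (T : lp (fun _ : ι => ℂ) 2 →L[ℂ] lp (fun _ : κ => ℂ) 2)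
    (x : lp (fun _ : κ => ℂ) 2) (j : ι) :
    (ContinuousLinearMap.adjoint T x) j = ⟪T (lp.single 2 j 1), x⟫_ℂ := by
  rw [← ContinuousLinearMap.adjoint_inner_right, inner_single_left']
  simp

section Ext

variable (f : ι → κ) (hf : Function.Injective f)

def extFun (x : lp (fun _ : ι => ℂ) 2) : κ → ℂ :=
  fun b => @dite ℂ (∃ a, f a = b) (Classical.dec _) (fun h => x h.choose) (fun _ => 0)

include hf in
lemma extFun_apply_f (x : lp (fun _ : ι => ℂ) 2) (a : ι) : extFun f x (f a) = x a := by
  have h : ∃ a', f a' = f a := ⟨a, rfl⟩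
  rw [extFun]
  rw [dif_pos h]
  rw [hf h.choose_spec]

lemma extFun_apply_ne (x : lp (fun _ : ι => ℂ) 2) {b : κ} (hb : b ∉ Set.range f) :
    extFun f x b = 0 := by
  have : ¬ ∃ a, f a = b := by simpa [Set.range] using hb
  rw [extFun, dif_neg this]

include hf in
lemma memℓp_extFun (x : lp (fun _ : ι => ℂ) 2) : Memℓp (extFun f x) 2 := by
  apply memℓp_gen
  have hx : Summable fun a => ‖x a‖ ^ (2 : ℝ≥0∞).toReal := by
    have := lp.memℓp x
    rw [memℓp_gen_iff (by norm_num : 0 < (2:ℝ≥0∞).toReal)] at this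
    exact this
  have h0 : ∀ b ∉ Set.range f, ‖extFun f x b‖ ^ (2 : ℝ≥0∞).toReal = 0 := by
    intro b hb
    rw [extFun_apply_ne f x hb]
    simp [Real.zero_rpow]
  rw [← hf.summable_iff h0]
  have : (fun a => ‖extFun f x (f a)‖ ^ (2 : ℝ≥0∞).toReal)
      = fun a => ‖x a‖ ^ (2 : ℝ≥0∞).toReal := by
    funext a; rw [extFun_apply_f f hf x a]
  rw [Function.comp_def, this]
  exact hx

lemma extFun_add (x y : lp (fun _ : ι => ℂ) 2) :
    extFun f (x + y) = extFun f x + extFun f y := by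
  funext b
  simp only [extFun, Pi.add_apply]
  by_cases h : ∃ a, f a = b
  · rw [dif_pos h, dif_pos h, dif_pos h, lp.coeFn_add]; rfl
  · rw [dif_neg h, dif_neg h, dif_neg h]; simp

lemma extFun_smul (c : ℂ) (x : lp (fun _ : ι => ℂ) 2) :
    extFun f (c • x) = c • extFun f x := by
  funext b
  simp only [extFun, Pi.smul_apply]
  by_cases h : ∃ a, f a = b
  · rw [dif_pos h, dif_pos h, lp.coeFn_smul]; rfl
  · rw [dif_neg h, dif_neg h]; simp

include hf in
def extLi : lp (fun _ : ι => ℂ) 2 →ₗᵢ[ℂ] lp (fun _ : κ => ℂ) 2 where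
  toFun x := ⟨extFun f x, memℓp_extFun f hf x⟩
  map_add' x y := by
    apply lp.ext
    rw [lp.coeFn_add]
    exact extFun_add f x y
  map_smul' c x := by
    apply lp.ext
    rw [lp.coeFn_smul]
    exact extFun_smul f c x
  norm_map' x := by
    have hp : (0:ℝ) < (2 : ℝ≥0∞).toReal := by norm_num
    have h0 : ∀ b ∉ Set.range f, ‖extFun f x b‖ ^ (2 : ℝ≥0∞).toReal = 0 := by
      intro b hb
      rw [extFun_apply_ne f x hb]
      simp [Real.zero_rpow]
    have key : ∀ y : lp (fun _ : κ => ℂ) 2, (y : ∀ _ : κ, ℂ) = extFun f x →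
        ‖y‖ = ‖x‖ := by
      intro y hy
      have h2 : ‖y‖ ^ (2 : ℝ≥0∞).toReal = ‖x‖ ^ (2 : ℝ≥0∞).toReal := by
        rw [lp.norm_rpow_eq_tsum hp, lp.norm_rpow_eq_tsum hp, hy]
        have key2 := hf.tsum_eq (f := fun b => ‖extFun f x b‖ ^ (2 : ℝ≥0∞).toReal)
          (Function.support_subset_iff'.mpr h0)
        rw [← key2]
        congr 1
        funext a
        rw [extFun_apply_f f hf x a]
      exact Real.rpow_left_injOn hp.ne' (Set.mem_setOf.mpr (norm_nonneg y))
        (Set.mem_setOf.mpr (norm_nonneg x)) h2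
    exact key _ rfl

include hf in
lemma extLi_apply_coe (x : lp (fun _ : ι => ℂ) 2) (b : κ) :
    (extLi f hf x) b = extFun f x b := rfl

include hf in
lemma extLi_single [DecidableEq ι] [DecidableEq κ] (i : ι) (c : ℂ) :
    extLi f hf (lp.single 2 i c) = lp.single 2 (f i) c := by
  apply lp.ext; funext b
  rw [extLi_apply_coe]
  by_cases hb : ∃ a, f a = b
  · rcases hb with ⟨a, rfl⟩
    rw [extFun_apply_f f hf, single_apply', single_apply']
    by_cases h : a = i
    · subst h; simp
    · rw [if_neg h, if_neg (fun hh => h (hf hh))]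
  · rw [extFun_apply_ne f _ (by simpa [Set.range, eq_comm] using hb), single_apply', if_neg]
    rintro rfl; exact hb ⟨i, rfl⟩

end Ext

end LpAux


noncomputable section MAux
open LpAux
open scoped InnerProductSpace ComplexConjugate ENNReal Classical

variable {r : ℕ} {J : Set (Fin r × Fin r)} {L : Type*}

theorem MWord.ext' {w w' : MWord r J L} (h1 : w.head = w'.head) (h2 : w.tail = w'.tail) :
    w = w' := by
  cases w; cases w'; simp_all

def MWord.behead (w : MWord r J L) {y : MLetter r L} {t : List (MLetter r L)}
    (h : w.tail = y :: t) : MWord r J L :=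
  ⟨y, t, w.tailJ y (by rw [h]; exact List.mem_cons_self),
   fun z hz => w.tailJ z (by rw [h]; exact List.mem_cons_of_mem y hz),
   by have hc := w.chain; rw [h] at hc; exact (List.isChain_cons_cons.mp hc).2⟩

theorem MWord.head_link (w : MWord r J L) {y : MLetter r L} {t : List (MLetter r L)}
    (h : w.tail = y :: t) : w.head.1.2 = y.1.1 := by
  have hc := w.chain; rw [h] at hc; exact (List.isChain_cons_cons.mp hc).1

@[simp] theorem MWord.behead_head (w : MWord r J L) {y : MLetter r L} {t : List (MLetter r L)}
    (h : w.tail = y :: t) : (w.behead h).head = y := rfl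
@[simp] theorem MWord.behead_tail (w : MWord r J L) {y : MLetter r L} {t : List (MLetter r L)}
    (h : w.tail = y :: t) : (w.behead h).tail = t := rfl
@[simp] theorem MWord.cons_head (x : MLetter r L) (hx : x.1 ∈ J) (w : MWord r J L)
    (hc : x.1.2 = w.head.1.1) : (MWord.cons x hx w hc).head = x := rfl
@[simp] theorem MWord.cons_tail (x : MLetter r L) (hx : x.1 ∈ J) (w : MWord r J L)
    (hc : x.1.2 = w.head.1.1) : (MWord.cons x hx w hc).tail = w.head :: w.tail := rfl
@[simp] theorem MWord.single_head (x : MLetter r L) (hx : x.1 ∈ J) :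
    (MWord.single x hx).head = x := rfl
@[simp] theorem MWord.single_tail (x : MLetter r L) (hx : x.1 ∈ J) :
    (MWord.single x hx).tail = ([] : List (MLetter r L)) := rfl

theorem vac_def (k : Fin r) : (vac k : MSpace r J L) = mvec (Sum.inl k) := rfl
theorem wvec_def (w : MWord r J L) : (wvec w : MSpace r J L) = mvec (Sum.inr w) := rfl

theorem mvec_eq_single [inst : DecidableEq (MBasis r J L)] (i : MBasis r J L) :
    mvec i = lp.single 2 i 1 := by
  unfold mvec
  congr!

theorem mvec_apply (i j : MBasis r J L) :
    (mvec i : MSpace r J L) j = if j = i then 1 else 0 := by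
  rw [mvec_eq_single]; exact single_apply' i j 1

theorem inner_mvec_right (x : MSpace r J L) (i : MBasis r J L) :
    ⟪x, mvec i⟫_ℂ = conj (x i) := by
  rw [mvec_eq_single, inner_single_right', mul_one]

theorem inner_mvec_left (i : MBasis r J L) (x : MSpace r J L) :
    ⟪mvec i, x⟫_ℂ = x i := by
  rw [mvec_eq_single, inner_single_left']; simp

theorem adjoint_mvec_apply (T : MSpace r J L →L[ℂ] MSpace r J L) (i j : MBasis r J L) :
    (ContinuousLinearMap.adjoint T (mvec i)) j = conj ((T (mvec j)) i) := by
  rw [adjoint_apply', ← mvec_eq_single, inner_mvec_right]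

theorem coord_smul_mvec (c : ℂ) (i j : MBasis r J L) :
    ((c • mvec i : MSpace r J L) : ∀ _ : MBasis r J L, ℂ) j = if j = i then c else 0 := by
  rw [lp.coeFn_smul, Pi.smul_apply, mvec_apply]
  by_cases h : j = i <;> simp [h]

theorem coord_zero (j : MBasis r J L) : ((0 : MSpace r J L) : ∀ _ : MBasis r J L, ℂ) j = 0 := by
  rw [lp.coeFn_zero, Pi.zero_apply]

section Creation

variable {b' : ℝ} {p' q' : Fin r} {l : L} {hmem : ((p', q') : Fin r × Fin r) ∈ J}
  {T : MSpace r J L →L[ℂ] MSpace r J L}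

theorem adjointC_vac (hT : IsMFCreation b' p' q' l hmem T) (k : Fin r) :
    ContinuousLinearMap.adjoint T (vac k) = 0 := by
  obtain ⟨h1, h2, h3, h4⟩ := hT
  rw [vac_def] at h1 ⊢
  simp only [vac_def, wvec_def] at h1 h2 h3 h4
  apply lp.ext; funext j
  rw [adjoint_mvec_apply, coord_zero]
  rcases j with k' | v
  · by_cases hk : k' = q'
    · subst hk
      rw [h1, coord_smul_mvec]
      simp
    · rw [h2 k' hk]
      simp [coord_zero]
  · by_cases hv : v.head.1.1 = q'
    · rw [h3 v hv, coord_smul_mvec]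
      simp
    · rw [h4 v hv]
      simp [coord_zero]

theorem adjointC_wvec_nil_pos (hT : IsMFCreation b' p' q' l hmem T) (w : MWord r J L)
    (hw : w.tail = []) (hh : w.head = ((p', q'), l)) :
    ContinuousLinearMap.adjoint T (wvec w) = (Real.sqrt b' : ℂ) • vac q' := by
  obtain ⟨h1, h2, h3, h4⟩ := hT
  simp only [vac_def, wvec_def] at h1 h2 h3 h4 ⊢
  have hws : w = MWord.single ((p', q'), l) hmem := MWord.ext' (by simpa using hh) (by simpa using hw)
  apply lp.ext; funext j
  rw [adjoint_mvec_apply, coord_smul_mvec]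
  rcases j with k | v
  · by_cases hk : k = q'
    · subst hk
      rw [h1, coord_smul_mvec, if_pos (by rw [hws]), if_pos rfl, Complex.conj_ofReal]
    · rw [h2 k hk, coord_zero, if_neg (by simpa [Sum.inl.injEq] using hk)]
      simp
  · rw [if_neg (by simp)]
    by_cases hv : v.head.1.1 = q'
    · rw [h3 v hv, coord_smul_mvec, if_neg]
      · simp
      · intro he
        have := congrArg MWord.tail (Sum.inr.inj he)
        rw [hw] at this
        simp at this
    · rw [h4 v hv, coord_zero]
      simp

theorem adjointC_wvec_cons_pos (hT : IsMFCreation b' p' q' l hmem T) (w : MWord r J L)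
    {y : MLetter r L} {t : List (MLetter r L)} (hw : w.tail = y :: t)
    (hh : w.head = ((p', q'), l)) :
    ContinuousLinearMap.adjoint T (wvec w) = (Real.sqrt b' : ℂ) • wvec (w.behead hw) := by
  obtain ⟨h1, h2, h3, h4⟩ := hT
  simp only [vac_def, wvec_def] at h1 h2 h3 h4 ⊢
  apply lp.ext; funext j
  rw [adjoint_mvec_apply, coord_smul_mvec]
  rcases j with k | v
  · rw [if_neg (by simp)]
    by_cases hk : k = q'
    · subst hk
      rw [h1, coord_smul_mvec, if_neg]
      · simp
      · intro he
        have := congrArg MWord.tail (Sum.inr.inj he)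
        rw [hw] at this
        simp at this
    · rw [h2 k hk, coord_zero]
      simp
  · by_cases hv : v.head.1.1 = q'
    · rw [h3 v hv, coord_smul_mvec]
      have hiff : (Sum.inr w : MBasis r J L) = Sum.inr (MWord.cons ((p', q'), l) hmem v hv.symm)
          ↔ (Sum.inr v : MBasis r J L) = Sum.inr (w.behead hw) := by
        constructor
        · intro he
          have ht := congrArg MWord.tail (Sum.inr.inj he)
          rw [hw] at ht
          simp only [MWord.cons_tail] at ht
          exact congrArg Sum.inr (MWord.ext'
            (by rw [MWord.behead_head]; exact (List.cons.injEq y t v.head v.tail ▸ ht : _ ∧ _).1.symm)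
            (by rw [MWord.behead_tail]; exact ((List.cons.injEq y t v.head v.tail ▸ ht : _ ∧ _)).2.symm))
        · intro he
          have he' := Sum.inr.inj he
          refine congrArg Sum.inr (MWord.ext' (by simpa using hh) ?_)
          rw [hw, MWord.cons_tail, he']
          simp
      by_cases hc : (Sum.inr w : MBasis r J L) = Sum.inr (MWord.cons ((p', q'), l) hmem v hv.symm)
      · rw [if_pos hc, if_pos (hiff.mp hc), Complex.conj_ofReal]
      · rw [if_neg hc, if_neg (fun hh2 => hc (hiff.mpr hh2))]
        simp
    · rw [h4 v hv, coord_zero, if_neg]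
      · simp
      · intro he
        apply hv
        have hvy : v.head = y := by rw [Sum.inr.inj he]; simp
        rw [hvy, ← MWord.head_link w hw, hh]

theorem adjointC_wvec_ne (hT : IsMFCreation b' p' q' l hmem T) (w : MWord r J L)
    (hne : w.head ≠ ((p', q'), l)) :
    ContinuousLinearMap.adjoint T (wvec w) = 0 := by
  obtain ⟨h1, h2, h3, h4⟩ := hT
  simp only [vac_def, wvec_def] at h1 h2 h3 h4 ⊢
  apply lp.ext; funext j
  rw [adjoint_mvec_apply, coord_zero]
  rcases j with k | v
  · by_cases hk : k = q'
    · subst hk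
      rw [h1, coord_smul_mvec, if_neg]
      · simp
      · intro he
        exact hne (by rw [Sum.inr.inj he]; simp)
    · rw [h2 k hk, coord_zero]
      simp
  · by_cases hv : v.head.1.1 = q'
    · rw [h3 v hv, coord_smul_mvec, if_neg]
      · simp
      · intro he
        exact hne (by rw [Sum.inr.inj he]; simp)
    · rw [h4 v hv, coord_zero]
      simp

end Creation

end MAux


noncomputable section FAux
open LpAux
open scoped InnerProductSpace ComplexConjugate ENNReal Classical

variable {I : Type*}

theorem fvac_def : (fvac : FSpace I) = fvec (Sum.inl ()) := rfl
theorem fword_def (w : List I) (hw : w ≠ []) : fword w hw = fvec (Sum.inr ⟨w, hw⟩) := rfl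

theorem fvec_eq_single [inst : DecidableEq (FBasis I)] (i : FBasis I) :
    (fvec i : FSpace I) = lp.single 2 i 1 := by
  unfold fvec
  congr!

theorem fvec_apply (i j : FBasis I) : (fvec i : FSpace I) j = if j = i then 1 else 0 := by
  rw [fvec_eq_single]; exact single_apply' i j 1

theorem inner_fvec_right (x : FSpace I) (i : FBasis I) : ⟪x, fvec i⟫_ℂ = conj (x i) := by
  rw [fvec_eq_single, inner_single_right', mul_one]

theorem inner_fvec_left (i : FBasis I) (x : FSpace I) : ⟪fvec i, x⟫_ℂ = x i := by
  rw [fvec_eq_single, inner_single_left']; simp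

theorem adjoint_fvec_apply (T : FSpace I →L[ℂ] FSpace I) (i j : FBasis I) :
    (ContinuousLinearMap.adjoint T (fvec i)) j = conj ((T (fvec j)) i) := by
  rw [adjoint_apply', ← fvec_eq_single, inner_fvec_right]

theorem coord_smul_fvec (c : ℂ) (i j : FBasis I) :
    ((c • fvec i : FSpace I) : ∀ _ : FBasis I, ℂ) j = if j = i then c else 0 := by
  rw [lp.coeFn_smul, Pi.smul_apply, fvec_apply]
  by_cases h : j = i <;> simp [h]

theorem coord_zeroF (j : FBasis I) : ((0 : FSpace I) : ∀ _ : FBasis I, ℂ) j = 0 := by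
  rw [lp.coeFn_zero, Pi.zero_apply]

section Free

variable {i : I} {T : FSpace I →L[ℂ] FSpace I}

theorem adjointEll_fvac (hT : IsFreeCreation i T) :
    ContinuousLinearMap.adjoint T (fvac : FSpace I) = 0 := by
  obtain ⟨h1, h2⟩ := hT
  simp only [fvac_def, fword_def] at h1 h2 ⊢
  apply lp.ext; funext j
  rw [adjoint_fvec_apply, coord_zeroF]
  rcases j with ⟨⟩ | ⟨w, hw⟩
  · rw [h1, fvec_apply, if_neg (by simp)]
    simp
  · rw [h2 w hw, fvec_apply, if_neg (by simp)]
    simp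

theorem adjointEll_single_pos (hT : IsFreeCreation i T) (h : [i] ≠ []) :
    ContinuousLinearMap.adjoint T (fword [i] h) = (fvac : FSpace I) := by
  obtain ⟨h1, h2⟩ := hT
  simp only [fvac_def, fword_def] at h1 h2 ⊢
  apply lp.ext; funext j
  rw [adjoint_fvec_apply]
  rcases j with ⟨⟩ | ⟨w, hw⟩
  · rw [h1, fvec_apply, if_pos rfl, fvec_apply, if_pos rfl]
    simp
  · rw [h2 w hw, fvec_apply, if_neg, fvec_apply, if_neg (by simp)]
    · simp
    · simp only [Sum.inr.injEq, Subtype.mk.injEq, List.cons.injEq]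
      rintro ⟨-, hh⟩
      exact hw hh.symm

theorem adjointEll_cons_pos (hT : IsFreeCreation i T) (w : List I) (hw : w ≠ [])
    (h : i :: w ≠ []) :
    ContinuousLinearMap.adjoint T (fword (i :: w) h) = fword w hw := by
  obtain ⟨h1, h2⟩ := hT
  simp only [fvac_def, fword_def] at h1 h2 ⊢
  apply lp.ext; funext j
  rw [adjoint_fvec_apply]
  rcases j with ⟨⟩ | ⟨v, hv⟩
  · rw [h1, fvec_apply, if_neg, fvec_apply, if_neg (by simp)]
    · simp
    · simp only [Sum.inr.injEq, Subtype.mk.injEq, List.cons.injEq]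
      rintro ⟨-, hh⟩
      exact hw hh
  · rw [h2 v hv, fvec_apply, fvec_apply]
    by_cases hvw : v = w
    · subst hvw
      rw [if_pos rfl, if_pos rfl]
      simp
    · rw [if_neg, if_neg]
      · simp
      · simp only [Sum.inr.injEq, Subtype.mk.injEq]
        exact fun hh => hvw hh
      · simp only [Sum.inr.injEq, Subtype.mk.injEq, List.cons.injEq]
        rintro ⟨-, hh⟩
        exact hvw hh.symm

theorem adjointEll_cons_ne (hT : IsFreeCreation i T) (a : I) (w : List I)
    (h : a :: w ≠ []) (ha : a ≠ i) :
    ContinuousLinearMap.adjoint T (fword (a :: w) h) = 0 := by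
  obtain ⟨h1, h2⟩ := hT
  simp only [fvac_def, fword_def] at h1 h2 ⊢
  apply lp.ext; funext j
  rw [adjoint_fvec_apply, coord_zeroF]
  rcases j with ⟨⟩ | ⟨v, hv⟩
  · rw [h1, fvec_apply, if_neg]
    · simp
    · simp only [Sum.inr.injEq, Subtype.mk.injEq, List.cons.injEq]
      rintro ⟨hh, -⟩
      exact ha hh
  · rw [h2 v hv, fvec_apply, if_neg]
    · simp
    · simp only [Sum.inr.injEq, Subtype.mk.injEq, List.cons.injEq]
      rintro ⟨hh, -⟩
      exact ha hh

end Free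

theorem diag_adjoint (P : FSpace I →L[ℂ] FSpace I) (c : FBasis I → ℝ)
    (h : ∀ j, P (fvec j) = (c j : ℂ) • fvec j) : ContinuousLinearMap.adjoint P = P := by
  apply ext_on_singles
  intro i
  rw [← fvec_eq_single]
  apply lp.ext; funext j
  rw [adjoint_fvec_apply, h j, h i, coord_smul_fvec, coord_smul_fvec]
  by_cases hij : i = j
  · subst hij
    rw [if_pos rfl]
    exact Complex.conj_ofReal _
  · rw [if_neg hij, if_neg (fun hh => hij hh.symm)]
    simp

end FAux

noncomputable section PhiAux
open LpAux
open scoped InnerProductSpace ComplexConjugate ENNReal Classical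

variable {r : ℕ} {U : Type}

def lab (u : U) : Fin 2 → U ⊕ U := fun a => if a = 0 then Sum.inl u else Sum.inr u

theorem lab_zero (u : U) : lab u 0 = Sum.inl u := rfl
theorem lab_one (u : U) : lab u 1 = Sum.inr u := rfl

theorem lab_inj (u : U) : Function.Injective (lab u) := by
  intro a b h
  fin_cases a <;> fin_cases b <;> simp_all [lab]

def oth (p q k : Fin r) : Fin r := if k = p then q else p

def phi (u : U) (p q : Fin r) : Fin 2 → List (Fin 2) → MWord r Set.univ (U ⊕ U)
  | a, [] => MWord.single ((p, q), lab u a) (Set.mem_univ _)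
  | a, b :: t =>
      MWord.cons ((oth p q ((phi u p q b t).head.1.1), (phi u p q b t).head.1.1), lab u a)
        (Set.mem_univ _) (phi u p q b t) rfl

theorem phi_head (u : U) {p q : Fin r} (hpq : p ≠ q) (a : Fin 2) (t : List (Fin 2)) :
    (phi u p q a t).head =
      ((if Odd (t.length + 1) then (p, q) else (q, p)), lab u a) := by
  induction t generalizing a with
  | nil => simp [phi]
  | cons b t ih =>
      have h1 : (phi u p q b t).head.1.1 = if Odd (t.length + 1) then p else q := by
        rw [ih b]
        by_cases ho : Odd (t.length + 1) <;> simp [ho]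
      rw [phi, MWord.cons_head, h1]
      have hpar : Odd ((b :: t).length + 1) ↔ ¬ Odd (t.length + 1) := by
        rw [List.length_cons]
        rw [Nat.odd_add_one]
      by_cases ho : Odd (t.length + 1)
      · rw [if_pos ho, if_neg (by rw [hpar]; exact not_not_intro ho)]
        simp [oth]
      · rw [if_neg ho, if_pos (hpar.mpr ho)]
        simp [oth, Ne.symm hpq]

def wlabels {J : Set (Fin r × Fin r)} {L : Type*} (w : MWord r J L) : List L :=
  w.head.2 :: w.tail.map Prod.snd

theorem wlabels_phi (u : U) (p q : Fin r) (a : Fin 2) (t : List (Fin 2)) :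
    wlabels (phi u p q a t) = (a :: t).map (lab u) := by
  induction t generalizing a with
  | nil => simp [phi, wlabels, MWord.single]
  | cons b t ih =>
      have : wlabels (phi u p q a (b :: t)) = lab u a :: wlabels (phi u p q b t) := rfl
      rw [this, ih b]
      simp

theorem phi_inj (u : U) (p q : Fin r) {a a' : Fin 2} {t t' : List (Fin 2)}
    (h : phi u p q a t = phi u p q a' t') : a = a' ∧ t = t' := by
  have h1 := congrArg wlabels h
  rw [wlabels_phi, wlabels_phi] at h1
  have h2 := List.map_injective_iff.mpr (lab_inj u) h1
  simpa using h2

def iot (u : U) (p q : Fin r) : FBasis (Fin 2) → MBasis r Set.univ (U ⊕ U)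
  | Sum.inl _ => Sum.inl q
  | Sum.inr ⟨[], h⟩ => absurd rfl h
  | Sum.inr ⟨a :: t, _⟩ => Sum.inr (phi u p q a t)

theorem iot_inj (u : U) (p q : Fin r) : Function.Injective (iot u p q) := by
  rintro (⟨⟩ | ⟨(_ | ⟨a, t⟩), h⟩) (⟨⟩ | ⟨(_ | ⟨a', t'⟩), h'⟩) he
  · rfl
  · exact absurd rfl h'
  · simp [iot] at he
  · exact absurd rfl h
  · exact absurd rfl h
  · exact absurd rfl h
  · simp [iot] at he
  · exact absurd rfl h'
  · rw [iot, iot] at he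
    obtain ⟨rfl, rfl⟩ := phi_inj u p q (Sum.inr.inj he)
    rfl

def VV (u : U) (p q : Fin r) : FSpace (Fin 2) →ₗᵢ[ℂ] MSpace r Set.univ (U ⊕ U) :=
  extLi (iot u p q) (iot_inj u p q)

theorem VV_fvec (u : U) (p q : Fin r) (i : FBasis (Fin 2)) :
    VV u p q (fvec i) = mvec (iot u p q i) := by
  rw [fvec_eq_single, mvec_eq_single]
  exact extLi_single _ (iot_inj u p q) i 1

theorem VV_fvac (u : U) (p q : Fin r) : VV u p q (fvac : FSpace (Fin 2)) = vac q := by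
  rw [fvac_def, VV_fvec]; rfl

theorem VV_fword (u : U) (p q : Fin r) (a : Fin 2) (t : List (Fin 2)) (h : a :: t ≠ []) :
    VV u p q (fword (a :: t) h) = wvec (phi u p q a t) := by
  rw [fword_def, VV_fvec]; rfl

end PhiAux



noncomputable section Intertwine
set_option maxHeartbeats 1000000
open LpAux
open scoped InnerProductSpace ComplexConjugate ENNReal Classical

variable {r : ℕ} {U : Type}

theorem fin2_cases (a : Fin 2) : a = 0 ∨ a = 1 := by
  fin_cases a
  · exact Or.inl rfl
  · exact Or.inr rfl

theorem phi_cons_even (u : U) {p q : Fin r} (hpq : p ≠ q) (c a : Fin 2) (t : List (Fin 2))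
    (h1 : (phi u p q a t).head.1.1 = q) :
    MWord.cons ((p, q), lab u c) (Set.mem_univ _) (phi u p q a t) h1.symm
      = phi u p q c (a :: t) := by
  refine MWord.ext' ?_ rfl
  simp [phi, MWord.cons_head, h1, oth, Ne.symm hpq]

theorem phi_cons_odd (u : U) {p q : Fin r} (hpq : p ≠ q) (c a : Fin 2) (t : List (Fin 2))
    (h1 : (phi u p q a t).head.1.1 = p) :
    MWord.cons ((q, p), lab u c) (Set.mem_univ _) (phi u p q a t) h1.symm
      = phi u p q c (a :: t) := by
  refine MWord.ext' ?_ rfl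
  simp [phi, MWord.cons_head, h1, oth]

theorem intertwineA (u : U) (p q : Fin r) (hpq : p ≠ q)
    (b : Fin r → Fin r → U → ℝ) (hbsym : b p q u = b q p u)
    (C : (p' q' : Fin r) → (U ⊕ U) →
      (MSpace r Set.univ (U ⊕ U) →L[ℂ] MSpace r Set.univ (U ⊕ U)))
    (hC : ∀ p' q' l, IsMFCreation (b p' q' (Sum.elim id id l)) p' q' l (Set.mem_univ _)
      (C p' q' l))
    (ell : Fin 2 → (FSpace (Fin 2) →L[ℂ] FSpace (Fin 2)))
    (hell : ∀ i, IsFreeCreation i (ell i))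
    (P₂ : FSpace (Fin 2) →L[ℂ] FSpace (Fin 2))
    (hP₂ : P₂ (fvac : FSpace (Fin 2)) = fvac ∧ ∀ (w : List (Fin 2)) (hw : w ≠ []),
      P₂ (fword w hw) = if Odd w.length then 0 else fword w hw) :
    (C p q (Sum.inl u) + ContinuousLinearMap.adjoint (C q p (Sum.inr u))).comp
        (VV u p q).toContinuousLinearMap
      = (VV u p q).toContinuousLinearMap.comp
          ((((Real.sqrt (b p q u) : ℂ) • (ell 0 + ContinuousLinearMap.adjoint (ell 1)))).comp
            P₂) := by
  have hCA := hC p q (Sum.inl u); simp only [Sum.elim_inl, id_eq] at hCA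
  have hCB := hC q p (Sum.inr u); simp only [Sum.elim_inr, id_eq, ← hbsym] at hCB
  apply ext_on_singles
  intro i
  rw [← fvec_eq_single]
  simp only [ContinuousLinearMap.comp_apply, LinearIsometry.coe_toContinuousLinearMap,
    ContinuousLinearMap.add_apply]
  rcases i with ⟨⟩ | ⟨(_ | ⟨a, t⟩), hi⟩
  · rw [← fvac_def, VV_fvac, hCA.1, adjointC_vac hCB q, add_zero, hP₂.1,
      ContinuousLinearMap.smul_apply, ContinuousLinearMap.add_apply, (hell 0).1,
      adjointEll_fvac (hell 1), add_zero, map_smul, VV_fword u p q 0 [] (by simp)]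
    rfl
  · exact absurd rfl hi
  · rw [← fword_def, VV_fword]
    rcases Nat.even_or_odd ((a :: t).length) with hev | hod
    · -- even length: creation applies
      rcases t with _ | ⟨y, t'⟩
      · simp [Nat.even_iff] at hev
      · have hnodd : ¬ Odd ((a :: y :: t').length) := by
          rw [Nat.not_even_iff_odd.symm]; exact not_not_intro hev
        have hhead : (phi u p q a (y :: t')).head = ((q, p), lab u a) := by
          rw [phi_head u hpq, if_neg (by simpa using hnodd)]
        have hq1 : (phi u p q a (y :: t')).head.1.1 = q := by rw [hhead]
        have htl : (phi u p q a (y :: t')).tail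
            = (phi u p q y t').head :: (phi u p q y t').tail := rfl
        rw [hCA.2.2.1 (phi u p q a (y :: t')) hq1]
        rw [hP₂.2 _ hi, if_neg hnodd]
        rw [ContinuousLinearMap.smul_apply, ContinuousLinearMap.add_apply,
          (hell 0).2 (a :: y :: t') hi, map_smul, map_add,
          VV_fword u p q 0 (a :: y :: t') (by simp)]
        rcases fin2_cases a with rfl | rfl
        · -- a = 0 : annihilation parts vanish
          rw [adjointC_wvec_ne hCB _ (by rw [hhead]; simp [lab]),
            adjointEll_cons_ne (hell 1) 0 (y :: t') hi (by simp), add_zero, map_zero, add_zero]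
          rw [show MWord.cons ((p, q), (Sum.inl u : U ⊕ U)) (Set.mem_univ _)
              (phi u p q 0 (y :: t')) hq1.symm = phi u p q 0 (0 :: y :: t') from
            phi_cons_even u hpq 0 0 (y :: t') hq1]
        · -- a = 1 : annihilation parts act
          rw [adjointC_wvec_cons_pos hCB _ htl (by rw [hhead]; rfl)]
          rw [adjointEll_cons_pos (hell 1) (y :: t') (by simp) hi]
          rw [VV_fword u p q y t' (by simp), smul_add]
          rw [show (phi u p q 1 (y :: t')).behead htl = phi u p q y t' from
            MWord.ext' rfl rfl]
          rw [show MWord.cons ((p, q), (Sum.inl u : U ⊕ U)) (Set.mem_univ _)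
              (phi u p q 1 (y :: t')) hq1.symm = phi u p q 0 (1 :: y :: t') from
            phi_cons_even u hpq 0 1 (y :: t') hq1]
    · -- odd length: everything vanishes
      have hhead : (phi u p q a t).head = ((p, q), lab u a) := by
        rw [phi_head u hpq, if_pos (by simpa using hod)]
      rw [hCA.2.2.2 (phi u p q a t) (by rw [hhead]; exact hpq)]
      rw [adjointC_wvec_ne hCB (phi u p q a t) (by
        rw [hhead]
        intro he
        exact hpq (congrArg (fun z => z.1.1) he))]
      rw [hP₂.2 (a :: t) hi, if_pos hod, map_zero, map_zero, add_zero]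

theorem intertwineB (u : U) (p q : Fin r) (hpq : p ≠ q)
    (b : Fin r → Fin r → U → ℝ) (hbsym : b p q u = b q p u)
    (C : (p' q' : Fin r) → (U ⊕ U) →
      (MSpace r Set.univ (U ⊕ U) →L[ℂ] MSpace r Set.univ (U ⊕ U)))
    (hC : ∀ p' q' l, IsMFCreation (b p' q' (Sum.elim id id l)) p' q' l (Set.mem_univ _)
      (C p' q' l))
    (ell : Fin 2 → (FSpace (Fin 2) →L[ℂ] FSpace (Fin 2)))
    (hell : ∀ i, IsFreeCreation i (ell i))
    (P₁ : FSpace (Fin 2) →L[ℂ] FSpace (Fin 2))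
    (hP₁ : P₁ (fvac : FSpace (Fin 2)) = 0 ∧ ∀ (w : List (Fin 2)) (hw : w ≠ []),
      P₁ (fword w hw) = if Odd w.length then fword w hw else 0) :
    (C q p (Sum.inl u) + ContinuousLinearMap.adjoint (C p q (Sum.inr u))).comp
        (VV u p q).toContinuousLinearMap
      = (VV u p q).toContinuousLinearMap.comp
          ((((Real.sqrt (b p q u) : ℂ) • (ell 0 + ContinuousLinearMap.adjoint (ell 1)))).comp
            P₁) := by
  have hCA := hC q p (Sum.inl u); simp only [Sum.elim_inl, id_eq, ← hbsym] at hCA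
  have hCB := hC p q (Sum.inr u); simp only [Sum.elim_inr, id_eq] at hCB
  apply ext_on_singles
  intro i
  rw [← fvec_eq_single]
  simp only [ContinuousLinearMap.comp_apply, LinearIsometry.coe_toContinuousLinearMap,
    ContinuousLinearMap.add_apply]
  rcases i with ⟨⟩ | ⟨(_ | ⟨a, t⟩), hi⟩
  · rw [← fvac_def, VV_fvac, hCA.2.1 q (Ne.symm hpq), adjointC_vac hCB q, add_zero, hP₁.1,
      map_zero, map_zero]
  · exact absurd rfl hi
  · rw [← fword_def, VV_fword]
    rcases Nat.even_or_odd ((a :: t).length) with hev | hod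
    · -- even length: everything vanishes
      have hnodd : ¬ Odd ((a :: t).length) := by
        simp only [List.length_cons, Nat.odd_iff, Nat.even_iff] at hev ⊢; omega
      rcases t with _ | ⟨y, t'⟩
      · simp [Nat.even_iff] at hev
      · have hhead : (phi u p q a (y :: t')).head = ((q, p), lab u a) := by
          rw [phi_head u hpq, if_neg (by simpa using hnodd)]
        rw [hCA.2.2.2 (phi u p q a (y :: t')) (by rw [hhead]; exact Ne.symm hpq)]
        rw [adjointC_wvec_ne hCB (phi u p q a (y :: t')) (by
          rw [hhead]
          intro he
          exact hpq (congrArg (fun z => z.1.1) he).symm)]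
        rw [hP₁.2 _ hi, if_neg hnodd, map_zero, map_zero, add_zero]
    · -- odd length: creation applies
      have hhead : (phi u p q a t).head = ((p, q), lab u a) := by
        rw [phi_head u hpq, if_pos (by simpa using hod)]
      have hp1 : (phi u p q a t).head.1.1 = p := by rw [hhead]
      rw [hCA.2.2.1 (phi u p q a t) hp1]
      rw [hP₁.2 _ hi, if_pos hod]
      rw [ContinuousLinearMap.smul_apply, ContinuousLinearMap.add_apply,
        (hell 0).2 (a :: t) hi, map_smul, map_add, VV_fword u p q 0 (a :: t) (by simp)]
      rcases fin2_cases a with rfl | rfl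
      · -- a = 0 : annihilation parts vanish
        rw [adjointC_wvec_ne hCB _ (by rw [hhead]; simp [lab]),
          adjointEll_cons_ne (hell 1) 0 t hi (by simp), add_zero, map_zero, add_zero]
        rw [show MWord.cons ((q, p), (Sum.inl u : U ⊕ U)) (Set.mem_univ _)
            (phi u p q 0 t) hp1.symm = phi u p q 0 (0 :: t) from
          phi_cons_odd u hpq 0 0 t hp1]
      · -- a = 1 : annihilation parts act
        rcases t with _ | ⟨y, t'⟩
        · rw [adjointC_wvec_nil_pos hCB _ rfl (by rw [hhead]; rfl)]
          rw [adjointEll_single_pos (hell 1) hi]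
          rw [VV_fvac, smul_add]
          rw [show MWord.cons ((q, p), (Sum.inl u : U ⊕ U)) (Set.mem_univ _)
              (phi u p q 1 []) hp1.symm = phi u p q 0 [1] from
            phi_cons_odd u hpq 0 1 [] hp1]
        · have htl : (phi u p q 1 (y :: t')).tail
              = (phi u p q y t').head :: (phi u p q y t').tail := rfl
          rw [adjointC_wvec_cons_pos hCB _ htl (by rw [hhead]; rfl)]
          rw [adjointEll_cons_pos (hell 1) (y :: t') (by simp) hi]
          rw [VV_fword u p q y t' (by simp), smul_add]
          rw [show (phi u p q 1 (y :: t')).behead htl = phi u p q y t' from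
            MWord.ext' rfl rfl]
          rw [show MWord.cons ((q, p), (Sum.inl u : U ⊕ U)) (Set.mem_univ _)
              (phi u p q 1 (y :: t')) hp1.symm = phi u p q 0 (1 :: y :: t') from
            phi_cons_odd u hpq 0 1 (y :: t') hp1]

theorem P_selfadjoint_odd (P₁ : FSpace (Fin 2) →L[ℂ] FSpace (Fin 2))
    (hP₁ : P₁ (fvac : FSpace (Fin 2)) = 0 ∧ ∀ (w : List (Fin 2)) (hw : w ≠ []),
      P₁ (fword w hw) = if Odd w.length then fword w hw else 0) :
    ContinuousLinearMap.adjoint P₁ = P₁ := by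
  refine diag_adjoint P₁ (fun j => match j with
    | Sum.inl _ => 0
    | Sum.inr ⟨w, _⟩ => if Odd w.length then 1 else 0) ?_
  rintro (⟨⟩ | ⟨w, hw⟩)
  · rw [← fvac_def, hP₁.1]
    norm_num
  · rw [← fword_def, hP₁.2 w hw]
    by_cases ho : Odd w.length
    · rw [if_pos ho]
      simp [ho, fword_def]
    · rw [if_neg ho]
      simp [ho]

theorem P_selfadjoint_even (P₂ : FSpace (Fin 2) →L[ℂ] FSpace (Fin 2))
    (hP₂ : P₂ (fvac : FSpace (Fin 2)) = fvac ∧ ∀ (w : List (Fin 2)) (hw : w ≠ []),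
      P₂ (fword w hw) = if Odd w.length then 0 else fword w hw) :
    ContinuousLinearMap.adjoint P₂ = P₂ := by
  refine diag_adjoint P₂ (fun j => match j with
    | Sum.inl _ => 1
    | Sum.inr ⟨w, _⟩ => if Odd w.length then 0 else 1) ?_
  rintro (⟨⟩ | ⟨w, hw⟩)
  · rw [← fvac_def, hP₂.1]
    norm_num
  · rw [← fword_def, hP₂.2 w hw]
    by_cases ho : Odd w.length
    · rw [if_pos ho]
      simp [ho]
    · rw [if_neg ho]
      simp [ho, fword_def]

theorem adjoint_cc (ell : Fin 2 → (FSpace (Fin 2) →L[ℂ] FSpace (Fin 2))) (s : ℝ) :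
    ContinuousLinearMap.adjoint ((s : ℂ) • (ell 0 + ContinuousLinearMap.adjoint (ell 1)))
      = (s : ℂ) • (ContinuousLinearMap.adjoint (ell 0) + ell 1) := by
  rw [← ContinuousLinearMap.star_eq_adjoint, star_smul, star_add,
    ContinuousLinearMap.star_eq_adjoint, ← ContinuousLinearMap.star_eq_adjoint (ell 1),
    star_star, Complex.star_def, Complex.conj_ofReal]

theorem intertwineA' (u : U) (p q : Fin r) (hpq : p ≠ q)
    (b : Fin r → Fin r → U → ℝ) (hbsym : b p q u = b q p u)
    (C : (p' q' : Fin r) → (U ⊕ U) →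
      (MSpace r Set.univ (U ⊕ U) →L[ℂ] MSpace r Set.univ (U ⊕ U)))
    (hC : ∀ p' q' l, IsMFCreation (b p' q' (Sum.elim id id l)) p' q' l (Set.mem_univ _)
      (C p' q' l))
    (ell : Fin 2 → (FSpace (Fin 2) →L[ℂ] FSpace (Fin 2)))
    (hell : ∀ i, IsFreeCreation i (ell i))
    (P₂ : FSpace (Fin 2) →L[ℂ] FSpace (Fin 2))
    (hP₂ : P₂ (fvac : FSpace (Fin 2)) = fvac ∧ ∀ (w : List (Fin 2)) (hw : w ≠ []),
      P₂ (fword w hw) = if Odd w.length then 0 else fword w hw) :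
    (ContinuousLinearMap.adjoint
        (C p q (Sum.inl u) + ContinuousLinearMap.adjoint (C q p (Sum.inr u)))).comp
        (VV u p q).toContinuousLinearMap
      = (VV u p q).toContinuousLinearMap.comp
          (ContinuousLinearMap.adjoint
            ((((Real.sqrt (b p q u) : ℂ) • (ell 0 + ContinuousLinearMap.adjoint (ell 1)))).comp
              P₂)) := by
  have hCA := hC p q (Sum.inl u); simp only [Sum.elim_inl, id_eq] at hCA
  have hCB := hC q p (Sum.inr u); simp only [Sum.elim_inr, id_eq, ← hbsym] at hCB
  rw [show ContinuousLinearMap.adjoint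
        (C p q (Sum.inl u) + ContinuousLinearMap.adjoint (C q p (Sum.inr u)))
      = ContinuousLinearMap.adjoint (C p q (Sum.inl u)) + C q p (Sum.inr u) by
    rw [map_add, ContinuousLinearMap.adjoint_adjoint]]
  rw [ContinuousLinearMap.adjoint_comp, P_selfadjoint_even P₂ hP₂, adjoint_cc]
  apply ext_on_singles
  intro i
  rw [← fvec_eq_single]
  simp only [ContinuousLinearMap.comp_apply, LinearIsometry.coe_toContinuousLinearMap,
    ContinuousLinearMap.add_apply]
  rcases i with ⟨⟩ | ⟨(_ | ⟨a, t⟩), hi⟩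
  · rw [← fvac_def, VV_fvac, adjointC_vac hCA q, hCB.2.1 q (Ne.symm hpq), add_zero,
      ContinuousLinearMap.smul_apply, ContinuousLinearMap.add_apply, adjointEll_fvac (hell 0),
      (hell 1).1, zero_add, map_smul, hP₂.2 [1] (by simp), if_pos (by decide),
      smul_zero, map_zero]
  · exact absurd rfl hi
  · rw [← fword_def, VV_fword]
    rw [ContinuousLinearMap.smul_apply, ContinuousLinearMap.add_apply,
      (hell 1).2 (a :: t) hi]
    rcases Nat.even_or_odd ((a :: t).length) with hev | hod
    · -- even length: everything vanishes
      have hnodd : ¬ Odd ((a :: t).length) := by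
        simp only [List.length_cons, Nat.odd_iff, Nat.even_iff] at hev ⊢; omega
      rcases t with _ | ⟨y, t'⟩
      · simp [Nat.even_iff] at hev
      · have hhead : (phi u p q a (y :: t')).head = ((q, p), lab u a) := by
          rw [phi_head u hpq, if_neg (by simpa using hnodd)]
        rw [adjointC_wvec_ne hCA (phi u p q a (y :: t')) (by
          rw [hhead]
          intro he
          exact hpq (congrArg (fun z => z.1.1) he).symm)]
        rw [hCB.2.2.2 (phi u p q a (y :: t')) (by rw [hhead]; exact Ne.symm hpq), add_zero]
        have hodd2 : Odd ((1 :: a :: y :: t').length) := by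
          simp only [List.length_cons, Nat.odd_iff, Nat.even_iff] at hev ⊢; omega
        rcases fin2_cases a with rfl | rfl
        · rw [adjointEll_cons_pos (hell 0) (y :: t') (by simp) hi]
          have hoddt : Odd ((y :: t').length) := by
            simp only [List.length_cons, Nat.odd_iff, Nat.even_iff] at hev ⊢; omega
          rw [map_smul, map_add, hP₂.2 (y :: t') (by simp), if_pos hoddt, zero_add,
            hP₂.2 (1 :: 0 :: y :: t') (by simp), if_pos hodd2, smul_zero, map_zero]
        · rw [adjointEll_cons_ne (hell 0) 1 (y :: t') hi (by decide), zero_add,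
            map_smul, hP₂.2 (1 :: 1 :: y :: t') (by simp), if_pos hodd2, smul_zero, map_zero]
    · -- odd length: creation part of LHS acts
      have hhead : (phi u p q a t).head = ((p, q), lab u a) := by
        rw [phi_head u hpq, if_pos (by simpa using hod)]
      have hp1 : (phi u p q a t).head.1.1 = p := by rw [hhead]
      rw [hCB.2.2.1 (phi u p q a t) hp1]
      have hnodd2 : ¬ Odd ((1 :: a :: t).length) := by
        simp only [List.length_cons, Nat.odd_iff] at hod ⊢; omega
      rcases fin2_cases a with rfl | rfl
      · rcases t with _ | ⟨y, t'⟩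
        · rw [adjointC_wvec_nil_pos hCA _ rfl (by rw [hhead]; rfl),
            adjointEll_single_pos (hell 0) hi]
          rw [map_smul, map_add, hP₂.1, hP₂.2 _ (by simp), if_neg hnodd2]
          rw [map_smul, map_add, VV_fvac, VV_fword u p q 1 (0 :: []) (by simp), smul_add]
          rw [show MWord.cons ((q, p), (Sum.inr u : U ⊕ U)) (Set.mem_univ _)
              (phi u p q 0 []) hp1.symm = phi u p q 1 (0 :: []) from
            phi_cons_odd u hpq 1 0 [] hp1]
        · have htl : (phi u p q 0 (y :: t')).tail
              = (phi u p q y t').head :: (phi u p q y t').tail := rfl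
          have hnoddt : ¬ Odd ((y :: t').length) := by
            simp only [List.length_cons, Nat.odd_iff] at hod ⊢; omega
          rw [adjointC_wvec_cons_pos hCA _ htl (by rw [hhead]; rfl),
            adjointEll_cons_pos (hell 0) (y :: t') (by simp) hi]
          rw [show (phi u p q 0 (y :: t')).behead htl = phi u p q y t' from
            MWord.ext' rfl rfl]
          rw [map_smul, map_add, hP₂.2 (y :: t') (by simp), if_neg hnoddt,
            hP₂.2 _ (by simp), if_neg hnodd2]
          rw [map_smul, map_add, VV_fword u p q y t' (by simp),
            VV_fword u p q 1 (0 :: y :: t') (by simp), smul_add]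
          rw [show MWord.cons ((q, p), (Sum.inr u : U ⊕ U)) (Set.mem_univ _)
              (phi u p q 0 (y :: t')) hp1.symm = phi u p q 1 (0 :: y :: t') from
            phi_cons_odd u hpq 1 0 (y :: t') hp1]
      · rw [adjointC_wvec_ne hCA _ (by rw [hhead]; simp [lab]), zero_add,
          adjointEll_cons_ne (hell 0) 1 t hi (by decide), zero_add]
        rw [map_smul, hP₂.2 _ (by simp), if_neg hnodd2]
        rw [map_smul, VV_fword u p q 1 (1 :: t) (by simp)]
        rw [show MWord.cons ((q, p), (Sum.inr u : U ⊕ U)) (Set.mem_univ _)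
            (phi u p q 1 t) hp1.symm = phi u p q 1 (1 :: t) from
          phi_cons_odd u hpq 1 1 t hp1]

theorem intertwineB' (u : U) (p q : Fin r) (hpq : p ≠ q)
    (b : Fin r → Fin r → U → ℝ) (hbsym : b p q u = b q p u)
    (C : (p' q' : Fin r) → (U ⊕ U) →
      (MSpace r Set.univ (U ⊕ U) →L[ℂ] MSpace r Set.univ (U ⊕ U)))
    (hC : ∀ p' q' l, IsMFCreation (b p' q' (Sum.elim id id l)) p' q' l (Set.mem_univ _)
      (C p' q' l))
    (ell : Fin 2 → (FSpace (Fin 2) →L[ℂ] FSpace (Fin 2)))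
    (hell : ∀ i, IsFreeCreation i (ell i))
    (P₁ : FSpace (Fin 2) →L[ℂ] FSpace (Fin 2))
    (hP₁ : P₁ (fvac : FSpace (Fin 2)) = 0 ∧ ∀ (w : List (Fin 2)) (hw : w ≠ []),
      P₁ (fword w hw) = if Odd w.length then fword w hw else 0) :
    (ContinuousLinearMap.adjoint
        (C q p (Sum.inl u) + ContinuousLinearMap.adjoint (C p q (Sum.inr u)))).comp
        (VV u p q).toContinuousLinearMap
      = (VV u p q).toContinuousLinearMap.comp
          (ContinuousLinearMap.adjoint
            ((((Real.sqrt (b p q u) : ℂ) • (ell 0 + ContinuousLinearMap.adjoint (ell 1)))).comp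
              P₁)) := by
  have hCA := hC q p (Sum.inl u); simp only [Sum.elim_inl, id_eq, ← hbsym] at hCA
  have hCB := hC p q (Sum.inr u); simp only [Sum.elim_inr, id_eq] at hCB
  rw [show ContinuousLinearMap.adjoint
        (C q p (Sum.inl u) + ContinuousLinearMap.adjoint (C p q (Sum.inr u)))
      = ContinuousLinearMap.adjoint (C q p (Sum.inl u)) + C p q (Sum.inr u) by
    rw [map_add, ContinuousLinearMap.adjoint_adjoint]]
  rw [ContinuousLinearMap.adjoint_comp, P_selfadjoint_odd P₁ hP₁, adjoint_cc]
  apply ext_on_singles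
  intro i
  rw [← fvec_eq_single]
  simp only [ContinuousLinearMap.comp_apply, LinearIsometry.coe_toContinuousLinearMap,
    ContinuousLinearMap.add_apply]
  rcases i with ⟨⟩ | ⟨(_ | ⟨a, t⟩), hi⟩
  · rw [← fvac_def, VV_fvac, adjointC_vac hCA q, hCB.1, zero_add,
      ContinuousLinearMap.smul_apply, ContinuousLinearMap.add_apply, adjointEll_fvac (hell 0),
      (hell 1).1, zero_add, map_smul, hP₁.2 [1] (by simp), if_pos (by decide), map_smul,
      VV_fword u p q 1 [] (by simp)]
    rfl
  · exact absurd rfl hi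
  · rw [← fword_def, VV_fword]
    rw [ContinuousLinearMap.smul_apply, ContinuousLinearMap.add_apply,
      (hell 1).2 (a :: t) hi]
    rcases Nat.even_or_odd ((a :: t).length) with hev | hod
    · -- even length: LHS acts
      have hnodd : ¬ Odd ((a :: t).length) := by
        simp only [List.length_cons, Nat.odd_iff, Nat.even_iff] at hev ⊢; omega
      rcases t with _ | ⟨y, t'⟩
      · simp [Nat.even_iff] at hev
      · have hhead : (phi u p q a (y :: t')).head = ((q, p), lab u a) := by
          rw [phi_head u hpq, if_neg (by simpa using hnodd)]
        have hq1 : (phi u p q a (y :: t')).head.1.1 = q := by rw [hhead]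
        have htl : (phi u p q a (y :: t')).tail
            = (phi u p q y t').head :: (phi u p q y t').tail := rfl
        have hoddt : Odd ((y :: t').length) := by
          simp only [List.length_cons, Nat.odd_iff, Nat.even_iff] at hev ⊢; omega
        have hodd2 : Odd ((1 :: a :: y :: t').length) := by
          simp only [List.length_cons, Nat.odd_iff, Nat.even_iff] at hev ⊢; omega
        rw [hCB.2.2.1 (phi u p q a (y :: t')) hq1]
        rcases fin2_cases a with rfl | rfl
        · rw [adjointC_wvec_cons_pos hCA _ htl (by rw [hhead]; rfl),
            adjointEll_cons_pos (hell 0) (y :: t') (by simp) hi]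
          rw [show (phi u p q 0 (y :: t')).behead htl = phi u p q y t' from
            MWord.ext' rfl rfl]
          rw [map_smul, map_add, hP₁.2 (y :: t') (by simp), if_pos hoddt,
            hP₁.2 _ (by simp), if_pos hodd2]
          rw [map_smul, map_add, VV_fword u p q y t' (by simp),
            VV_fword u p q 1 (0 :: y :: t') (by simp), smul_add]
          rw [show MWord.cons ((p, q), (Sum.inr u : U ⊕ U)) (Set.mem_univ _)
              (phi u p q 0 (y :: t')) hq1.symm = phi u p q 1 (0 :: y :: t') from
            phi_cons_even u hpq 1 0 (y :: t') hq1]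
        · rw [adjointC_wvec_ne hCA _ (by rw [hhead]; simp [lab]), zero_add,
            adjointEll_cons_ne (hell 0) 1 (y :: t') hi (by decide), zero_add]
          rw [map_smul, hP₁.2 _ (by simp), if_pos hodd2]
          rw [map_smul, VV_fword u p q 1 (1 :: y :: t') (by simp)]
          rw [show MWord.cons ((p, q), (Sum.inr u : U ⊕ U)) (Set.mem_univ _)
              (phi u p q 1 (y :: t')) hq1.symm = phi u p q 1 (1 :: y :: t') from
            phi_cons_even u hpq 1 1 (y :: t') hq1]
    · -- odd length: everything vanishes
      have hhead : (phi u p q a t).head = ((p, q), lab u a) := by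
        rw [phi_head u hpq, if_pos (by simpa using hod)]
      rw [adjointC_wvec_ne hCA (phi u p q a t) (by
        rw [hhead]
        intro he
        exact hpq (congrArg (fun z => z.1.1) he))]
      rw [hCB.2.2.2 (phi u p q a t) (by rw [hhead]; exact hpq), add_zero]
      have hnodd2 : ¬ Odd ((1 :: a :: t).length) := by
        simp only [List.length_cons, Nat.odd_iff] at hod ⊢; omega
      rcases fin2_cases a with rfl | rfl
      · rcases t with _ | ⟨y, t'⟩
        · rw [adjointEll_single_pos (hell 0) hi, map_smul, map_add, hP₁.1, zero_add,
            hP₁.2 (1 :: 0 :: []) (by simp), if_neg hnodd2, smul_zero, map_zero]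
        · have hnoddt : ¬ Odd ((y :: t').length) := by
            simp only [List.length_cons, Nat.odd_iff] at hod ⊢; omega
          rw [adjointEll_cons_pos (hell 0) (y :: t') (by simp) hi, map_smul, map_add,
            hP₁.2 (y :: t') (by simp), if_neg hnoddt, zero_add,
            hP₁.2 (1 :: 0 :: y :: t') (by simp), if_neg hnodd2, smul_zero, map_zero]
      · rw [adjointEll_cons_ne (hell 0) 1 t hi (by decide), zero_add,
          map_smul, hP₁.2 (1 :: 1 :: t) (by simp), if_neg hnodd2, smul_zero, map_zero]

theorem prod_intertwine {H K : Type*} [NormedAddCommGroup H] [NormedSpace ℂ H]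
    [NormedAddCommGroup K] [NormedSpace ℂ K] (Vc : H →L[ℂ] K)
    (F : Bool × Bool → K →L[ℂ] K) (G : Bool × Bool → H →L[ℂ] H)
    (hFG : ∀ e, (F e).comp Vc = Vc.comp (G e)) (l : List (Bool × Bool)) :
    ((l.map F).prod).comp Vc = Vc.comp ((l.map G).prod) := by
  induction l with
  | nil => simp only [List.map_nil, List.prod_nil, ContinuousLinearMap.one_def,
      ContinuousLinearMap.comp_id, ContinuousLinearMap.id_comp]
  | cons e l ih =>
      rw [List.map_cons, List.map_cons, List.prod_cons, List.prod_cons,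
        ContinuousLinearMap.mul_def, ContinuousLinearMap.mul_def,
        ContinuousLinearMap.comp_assoc, ih, ← ContinuousLinearMap.comp_assoc, hFG e,
        ContinuousLinearMap.comp_assoc]

end Intertwine

set_option synthInstance.maxHeartbeats 400000
set_option maxHeartbeats 1000000

/-- for `p ≠ q` with `b = b_{p,q}(u) = b_{q,p}(u) > 0`, the joint
*-distribution of the pair `{ζ_{p,q}(u), ζ_{q,p}(u)}` w.r.t. `Ψ_q` agrees with that of the
pair `{cP₂, cP₁}` w.r.t. the vacuum state, where `c = √b·(ℓ(1) + ℓ(2)*)` on `F({1,2})` and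
`P₁`, `P₂` are the orthogonal projections onto the odd and even subspaces. -/
theorem matricialRCircular_pair_oddEven_realization
    (r : ℕ) (hr : 1 ≤ r) (U : Type) [Finite U] (u : U) (p q : Fin r) (hpq : p ≠ q)
    (b : Fin r → Fin r → U → ℝ) (hb : ∀ p' q' u', 0 ≤ b p' q' u')
    (hbsym : b p q u = b q p u) (hbpos : 0 < b p q u)
    (C : (p' q' : Fin r) → (U ⊕ U) →
      (MSpace r Set.univ (U ⊕ U) →L[ℂ] MSpace r Set.univ (U ⊕ U)))
    (hC : ∀ p' q' l, IsMFCreation (b p' q' (Sum.elim id id l)) p' q' l (Set.mem_univ _)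
      (C p' q' l))
    (ell : Fin 2 → (FSpace (Fin 2) →L[ℂ] FSpace (Fin 2)))
    (hell : ∀ i, IsFreeCreation i (ell i))
    (P₁ P₂ : FSpace (Fin 2) →L[ℂ] FSpace (Fin 2))
    (hP₁ : P₁ (fvac : FSpace (Fin 2)) = 0 ∧ ∀ (w : List (Fin 2)) (hw : w ≠ []),
      P₁ (fword w hw) = if Odd w.length then fword w hw else 0)
    (hP₂ : P₂ (fvac : FSpace (Fin 2)) = fvac ∧ ∀ (w : List (Fin 2)) (hw : w ≠ []),
      P₂ (fword w hw) = if Odd w.length then 0 else fword w hw) :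
    ∀ (m : ℕ), 1 ≤ m → ∀ (choose : Fin m → Bool) (ε : Fin m → Bool),
      PsiM q (List.ofFn (fun j => sOp (ε j)
        (if choose j then
          C p q (Sum.inl u) + ContinuousLinearMap.adjoint (C q p (Sum.inr u))
         else
          C q p (Sum.inl u) + ContinuousLinearMap.adjoint (C p q (Sum.inr u))))).prod
      = fockState (List.ofFn (fun j => sOp (ε j)
          (if choose j then
            ((Real.sqrt (b p q u) : ℂ) • (ell 0 + ContinuousLinearMap.adjoint (ell 1))) * P₂
           else
            ((Real.sqrt (b p q u) : ℂ) • (ell 0 + ContinuousLinearMap.adjoint (ell 1))) * P₁))).prod := by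
  intro m _ choose ε
  have key : ∀ e : Bool × Bool,
      (sOp e.2 (if e.1 then
          C p q (Sum.inl u) + ContinuousLinearMap.adjoint (C q p (Sum.inr u))
        else
          C q p (Sum.inl u) + ContinuousLinearMap.adjoint (C p q (Sum.inr u)))).comp
        (VV u p q).toContinuousLinearMap
      = (VV u p q).toContinuousLinearMap.comp
        (sOp e.2 (if e.1 then
            ((Real.sqrt (b p q u) : ℂ) • (ell 0 + ContinuousLinearMap.adjoint (ell 1))) * P₂
          else
            ((Real.sqrt (b p q u) : ℂ) • (ell 0 + ContinuousLinearMap.adjoint (ell 1))) * P₁)) := by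
    rintro ⟨c, eps⟩
    cases c
    · cases eps
      · exact intertwineB' u p q hpq b hbsym C hC ell hell P₁ hP₁
      · exact intertwineB u p q hpq b hbsym C hC ell hell P₁ hP₁
    · cases eps
      · exact intertwineA' u p q hpq b hbsym C hC ell hell P₂ hP₂
      · exact intertwineA u p q hpq b hbsym C hC ell hell P₂ hP₂
  have hprod := prod_intertwine (VV u p q).toContinuousLinearMap
    (fun e => sOp e.2 (if e.1 then
        C p q (Sum.inl u) + ContinuousLinearMap.adjoint (C q p (Sum.inr u))
      else
        C q p (Sum.inl u) + ContinuousLinearMap.adjoint (C p q (Sum.inr u))))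
    (fun e => sOp e.2 (if e.1 then
        ((Real.sqrt (b p q u) : ℂ) • (ell 0 + ContinuousLinearMap.adjoint (ell 1))) * P₂
      else
        ((Real.sqrt (b p q u) : ℂ) • (ell 0 + ContinuousLinearMap.adjoint (ell 1))) * P₁))
    key (List.ofFn (fun j : Fin m => (choose j, ε j)))
  have hL : List.ofFn (fun j => sOp (ε j)
        (if choose j then
          C p q (Sum.inl u) + ContinuousLinearMap.adjoint (C q p (Sum.inr u))
         else
          C q p (Sum.inl u) + ContinuousLinearMap.adjoint (C p q (Sum.inr u))))
      = (List.ofFn (fun j : Fin m => (choose j, ε j))).map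
          (fun e => sOp e.2 (if e.1 then
              C p q (Sum.inl u) + ContinuousLinearMap.adjoint (C q p (Sum.inr u))
            else
              C q p (Sum.inl u) + ContinuousLinearMap.adjoint (C p q (Sum.inr u)))) := by
    rw [List.map_ofFn]; rfl
  have hR : List.ofFn (fun j => sOp (ε j)
        (if choose j then
          ((Real.sqrt (b p q u) : ℂ) • (ell 0 + ContinuousLinearMap.adjoint (ell 1))) * P₂
         else
          ((Real.sqrt (b p q u) : ℂ) • (ell 0 + ContinuousLinearMap.adjoint (ell 1))) * P₁))
      = (List.ofFn (fun j : Fin m => (choose j, ε j))).map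
          (fun e => sOp e.2 (if e.1 then
              ((Real.sqrt (b p q u) : ℂ) • (ell 0 + ContinuousLinearMap.adjoint (ell 1))) * P₂
            else
              ((Real.sqrt (b p q u) : ℂ) • (ell 0 + ContinuousLinearMap.adjoint (ell 1))) * P₁)) := by
    rw [List.map_ofFn]; rfl
  rw [hL, hR]
  unfold PsiM fockState
  rw [← VV_fvac u p q]
  have happ := congrArg
    (fun T : FSpace (Fin 2) →L[ℂ] MSpace r Set.univ (U ⊕ U) => T (fvac : FSpace (Fin 2))) hprod
  simp only [ContinuousLinearMap.comp_apply, LinearIsometry.coe_toContinuousLinearMap] at happ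
  rw [happ]
  exact (VV u p q).inner_map_map fvac _
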